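/- Let H be an N×N Jacobi matrix with positive off-diagonals, and let H_+ be the (N−1)×(N−1) matrix obtained by deleting the first row and column (Hochstadt's setting, n = 1). If H' is another Jacobi matrix with positive off-diagonals such that σ(H') = σ(H) and σ(H'_+) = σ(H_+), then H' = H. -/

import Mathlib

open Matrix Polynomial BigOperators

/-- A Jacobi matrix: real symmetric tridiagonal with positive off-diagonal entries. -/
def IsJacobi {N : ℕ} (H : Matrix (Fin N) (Fin N) ℝ) : Prop :=
  H.IsSymm ∧ (∀ i j : Fin N, (i : ℕ) + 1 < (j : ℕ) → H i j = 0) ∧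
    (∀ i j : Fin N, (j : ℕ) = (i : ℕ) + 1 → 0 < H i j)

/-- The principal block of `H` on indices `0, …, n-1` (paper: `H₋`). -/
def Jminus {N : ℕ} (H : Matrix (Fin N) (Fin N) ℝ) (n : Fin N) :
    Matrix (Fin (n : ℕ)) (Fin (n : ℕ)) ℝ :=
  H.submatrix (fun i => ⟨i, i.isLt.trans n.isLt⟩) (fun i => ⟨i, i.isLt.trans n.isLt⟩)

/-- The principal block of `H` on indices `n+1, …, N-1` (paper: `H₊`). -/
def Jplus {N : ℕ} (H : Matrix (Fin N) (Fin N) ℝ) (n : Fin N) :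
    Matrix (Fin (N - (n : ℕ) - 1)) (Fin (N - (n : ℕ) - 1)) ℝ :=
  H.submatrix (fun i => ⟨(n : ℕ) + 1 + i, by have := i.isLt; omega⟩)
    (fun i => ⟨(n : ℕ) + 1 + i, by have := i.isLt; omega⟩)

/-- `H` with the `n`-th row and column deleted. -/
def Jdel {N : ℕ} (H : Matrix (Fin N) (Fin N) ℝ) (n : Fin N) :
    Matrix (Fin (N - 1)) (Fin (N - 1)) ℝ :=
  H.submatrix
    (fun i => if h : (i : ℕ) < (n : ℕ) then ⟨i, h.trans n.isLt⟩
      else ⟨(i : ℕ) + 1, by have := i.isLt; omega⟩)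
    (fun i => if h : (i : ℕ) < (n : ℕ) then ⟨i, h.trans n.isLt⟩
      else ⟨(i : ℕ) + 1, by have := i.isLt; omega⟩)

lemma IsSymm.isHermitianReal {N : ℕ} {A : Matrix (Fin N) (Fin N) ℝ} (h : A.IsSymm) :
    A.IsHermitian := by
  have : Aᴴ = Aᵀ := by ext i j; simp [conjTranspose_apply]
  rw [Matrix.IsHermitian, this]; exact h

lemma my_eval_charpoly {N : ℕ} (M : Matrix (Fin N) (Fin N) ℝ) (r : ℝ) :
    (charpoly M).eval r = (algebraMap ℝ (Matrix (Fin N) (Fin N) ℝ) r - M).det := by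
  have hmap : (charmatrix M).map (evalRingHom r) = algebraMap ℝ (Matrix (Fin N) (Fin N) ℝ) r - M := by
    ext i j
    rcases eq_or_ne i j with rfl | hij
    · simp [charmatrix_apply_eq, Matrix.algebraMap_matrix_apply]
    · simp [charmatrix_apply_ne _ _ _ hij, Matrix.algebraMap_matrix_apply, hij]
  rw [charpoly, ← hmap]
  exact RingHom.map_det (evalRingHom r) (charmatrix M)

lemma spectrum_eq_roots {N : ℕ} (M : Matrix (Fin N) (Fin N) ℝ) :
    spectrum ℝ M = {r : ℝ | (charpoly M).eval r = 0} := by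
  ext r
  rw [spectrum.mem_iff, Set.mem_setOf_eq, Matrix.isUnit_iff_isUnit_det, my_eval_charpoly]
  simp [isUnit_iff_ne_zero, not_not]

lemma my_charpoly_conj {n : Type*} [Fintype n] [DecidableEq n] {R : Type*} [CommRing R]
    (P Q M : Matrix n n R) (h1 : P * Q = 1) (h2 : Q * P = 1) :
    charpoly (P * M * Q) = charpoly M := by
  have key : charmatrix (P * M * Q) = (P.map C) * charmatrix M * (Q.map C) := by
    have hPQ : (P.map C) * (Q.map C) = 1 := by
      have := congrArg (fun (A : Matrix n n R) => A.map (C : R →+* R[X])) h1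
      simpa [Matrix.map_mul] using this
    rw [charmatrix, charmatrix, RingHom.mapMatrix_apply, RingHom.mapMatrix_apply]
    rw [mul_sub, sub_mul]
    congr 1
    · have hc : Commute (scalar n (X : R[X])) (Q.map C) :=
        scalar_commute _ (fun r' => Commute.all _ _) _
      rw [mul_assoc, hc.eq, ← mul_assoc, hPQ, one_mul]
    · rw [Matrix.map_mul, Matrix.map_mul]
  rw [charpoly, charpoly, key, det_mul, det_mul, mul_comm, ← mul_assoc]
  rw [← det_mul, ← Matrix.map_mul, h2]
  simp

lemma charpoly_diagonal' {n : Type*} [Fintype n] [DecidableEq n] (d : n → ℝ) :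
    charpoly (diagonal d) = ∏ i, (X - C (d i)) := by
  have h : charmatrix (diagonal d) = diagonal (fun i => X - C (d i)) := by
    ext i j
    rcases eq_or_ne i j with rfl | hij
    · simp
    · rw [charmatrix_apply_ne _ _ _ hij, diagonal_apply_ne _ hij, diagonal_apply_ne _ hij,
        map_zero, neg_zero]
  rw [charpoly, h, det_diagonal]

lemma charpoly_eq_prod_eigenvalues {N : ℕ} (A : Matrix (Fin N) (Fin N) ℝ)
    (hA : A.IsHermitian) :
    charpoly A = ∏ i, (X - C (hA.eigenvalues i)) := by
  have h1 : (hA.eigenvectorUnitary : Matrix (Fin N) (Fin N) ℝ) *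
      star (hA.eigenvectorUnitary : Matrix (Fin N) (Fin N) ℝ) = 1 :=
    Matrix.mem_unitaryGroup_iff.mp hA.eigenvectorUnitary.2
  have h2 : star (hA.eigenvectorUnitary : Matrix (Fin N) (Fin N) ℝ) *
      (hA.eigenvectorUnitary : Matrix (Fin N) (Fin N) ℝ) = 1 :=
    Matrix.mem_unitaryGroup_iff'.mp hA.eigenvectorUnitary.2
  calc charpoly A
      = charpoly ((hA.eigenvectorUnitary : Matrix (Fin N) (Fin N) ℝ) *
          diagonal (RCLike.ofReal ∘ hA.eigenvalues) *
          star (hA.eigenvectorUnitary : Matrix (Fin N) (Fin N) ℝ)) := by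
        conv_lhs => rw [hA.spectral_theorem, Unitary.conjStarAlgAut_apply]
    _ = charpoly (diagonal (RCLike.ofReal ∘ hA.eigenvalues)) :=
        my_charpoly_conj _ _ _ h1 h2
    _ = ∏ i, (X - C (hA.eigenvalues i)) := by
        rw [charpoly_diagonal']
        simp [Function.comp]

lemma jacobi_vanish {N : ℕ} (H : Matrix (Fin (N+1)) (Fin (N+1)) ℝ) (hH : IsJacobi H)
    (μ : ℝ) (v : Fin (N+1) → ℝ) (hv : H *ᵥ v = μ • v) (h00 : v 0 = 0) : v = 0 := by
  obtain ⟨hsym, hupper, hpos⟩ := hH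
  have key : ∀ k : ℕ, ∀ hk : k < N + 1, v ⟨k, hk⟩ = 0 := by
    intro k
    induction k using Nat.strong_induction_on with
    | _ k IH =>
    intro hk
    match k, hk with
    | 0, hk => exact h00
    | (m+1), hk =>
      have hm : m < N + 1 := by omega
      have hrow : (H *ᵥ v) ⟨m, hm⟩ = μ * v ⟨m, hm⟩ := by rw [hv]; rfl
      have hvm : v ⟨m, hm⟩ = 0 := IH m (by omega) hm
      have hsum : (H *ᵥ v) ⟨m, hm⟩ = H ⟨m, hm⟩ ⟨m+1, hk⟩ * v ⟨m+1, hk⟩ := by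
        rw [mulVec, dotProduct]
        refine Finset.sum_eq_single (⟨m+1, hk⟩ : Fin (N+1)) ?_ ?_
        · intro j _ hj
          rcases lt_trichotomy (j : ℕ) (m+1) with hlt | heq | hgt
          · have := IH (j : ℕ) hlt j.isLt
            rw [Fin.eta] at this
            rw [this, mul_zero]
          · exact absurd (Fin.ext heq) hj
          · rw [hupper ⟨m, hm⟩ j (by simpa using hgt), zero_mul]
        · intro h; exact absurd (Finset.mem_univ _) h
      have hposm := hpos ⟨m, hm⟩ ⟨m+1, hk⟩ rfl
      have : H ⟨m, hm⟩ ⟨m+1, hk⟩ * v ⟨m+1, hk⟩ = 0 := by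
        rw [← hsum, hrow, hvm, mul_zero]
      exact (mul_eq_zero.mp this).resolve_left (ne_of_gt hposm)
  funext j
  have := key (j : ℕ) j.isLt
  rwa [Fin.eta] at this

lemma jacobi_eigenvalues_injective {N : ℕ} (H : Matrix (Fin (N+1)) (Fin (N+1)) ℝ)
    (hJ : IsJacobi H) (hA : H.IsHermitian) : Function.Injective hA.eigenvalues := by
  intro i j hij
  by_contra hne
  have horth := orthonormal_iff_ite.mp hA.eigenvectorBasis.orthonormal (i := i) (j := j)
  have horthii := orthonormal_iff_ite.mp hA.eigenvectorBasis.orthonormal (i := i) (j := i)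
  rw [if_neg hne] at horth
  rw [if_pos rfl] at horthii
  have hvi := hA.mulVec_eigenvectorBasis i
  have hvj := hA.mulVec_eigenvectorBasis j
  set v : Fin (N+1) → ℝ := ⇑(hA.eigenvectorBasis i) with hvdef
  set w : Fin (N+1) → ℝ := ⇑(hA.eigenvectorBasis j) with hwdef
  have hu : H *ᵥ (w 0 • v - v 0 • w) = hA.eigenvalues i • (w 0 • v - v 0 • w) := by
    rw [mulVec_sub, mulVec_smul, mulVec_smul, hvi, hvj, ← hij]
    funext k
    simp only [Pi.sub_apply, Pi.smul_apply, smul_eq_mul]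
    ring
  have hu0 : (w 0 • v - v 0 • w) 0 = 0 := by
    simp only [Pi.sub_apply, Pi.smul_apply, smul_eq_mul]
    ring
  have huz := jacobi_vanish H hJ _ _ hu hu0
  have hE : w 0 • hA.eigenvectorBasis i - v 0 • hA.eigenvectorBasis j = 0 := by
    ext k
    have := congrFun huz k
    simpa using this
  have hw0 : w 0 = 0 := by
    have h := congrArg (fun x => (inner ℝ (hA.eigenvectorBasis i) x : ℝ)) hE
    simpa [inner_sub_right, inner_smul_right, horth, horthii] using h
  have hwz := jacobi_vanish H hJ _ _ hvj hw0
  have hBj : hA.eigenvectorBasis j = 0 := by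
    ext k
    simpa using congrFun hwz k
  exact hA.eigenvectorBasis.orthonormal.ne_zero j hBj

lemma jacobi_spectrum_range {N : ℕ} (H : Matrix (Fin (N+1)) (Fin (N+1)) ℝ)
    (hA : H.IsHermitian) :
    spectrum ℝ H = Set.range hA.eigenvalues := by
  apply Set.eq_of_subset_of_subset
  · intro r hr
    rw [spectrum_eq_roots, Set.mem_setOf_eq, charpoly_eq_prod_eigenvalues H hA,
      eval_prod] at hr
    obtain ⟨i, _, hi⟩ := Finset.prod_eq_zero_iff.mp hr
    simp only [eval_sub, eval_X, eval_C, sub_eq_zero] at hi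
    exact ⟨i, hi.symm⟩
  · rintro r ⟨i, rfl⟩
    exact hA.eigenvalues_mem_spectrum_real i

lemma jacobi_charpoly_of_spectrum_eq {N : ℕ} (H H' : Matrix (Fin N) (Fin N) ℝ)
    (hJ : IsJacobi H) (hJ' : IsJacobi H') (hs : spectrum ℝ H = spectrum ℝ H') :
    charpoly H = charpoly H' := by
  cases N with
  | zero =>
    rw [charpoly, charpoly, det_isEmpty, det_isEmpty]
  | succ n =>
    have hA : H.IsHermitian := IsSymm.isHermitianReal hJ.1
    have hA' : H'.IsHermitian := IsSymm.isHermitianReal hJ'.1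
    have hrange : Set.range hA.eigenvalues = Set.range hA'.eigenvalues := by
      rw [← jacobi_spectrum_range H hA, ← jacobi_spectrum_range H' hA', hs]
    have himg : Finset.image hA.eigenvalues Finset.univ
        = Finset.image hA'.eigenvalues Finset.univ := by
      apply Finset.coe_injective
      rw [Finset.coe_image, Finset.coe_image, Finset.coe_univ, Set.image_univ, Set.image_univ,
        hrange]
    have hinj := jacobi_eigenvalues_injective H hJ hA
    have hinj' := jacobi_eigenvalues_injective H' hJ' hA'
    have e1 : ∏ x ∈ Finset.image hA.eigenvalues Finset.univ, (X - C x)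
        = ∏ i : Fin (n+1), (X - C (hA.eigenvalues i)) :=
      Finset.prod_image (fun x _ y _ h => hinj h)
    have e2 : ∏ x ∈ Finset.image hA'.eigenvalues Finset.univ, (X - C x)
        = ∏ i : Fin (n+1), (X - C (hA'.eigenvalues i)) :=
      Finset.prod_image (fun x _ y _ h => hinj' h)
    rw [charpoly_eq_prod_eigenvalues H hA, charpoly_eq_prod_eigenvalues H' hA',
      ← e1, ← e2, himg]

def tl {n : ℕ} (H : Matrix (Fin (n+1)) (Fin (n+1)) ℝ) : Matrix (Fin n) (Fin n) ℝ :=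
  H.submatrix Fin.succ Fin.succ

lemma charmatrix_tl {n : ℕ} (H : Matrix (Fin (n+1)) (Fin (n+1)) ℝ) :
    charmatrix (tl H) = (charmatrix H).submatrix Fin.succ Fin.succ := by
  ext i j
  rcases eq_or_ne i j with rfl | hij
  · simp [tl]
  · rw [charmatrix_apply_ne _ _ _ hij, submatrix_apply,
      charmatrix_apply_ne _ _ _ (fun h => hij (Fin.succ_injective _ h))]
    rfl

lemma charpoly_tl_rec {n : ℕ} (H : Matrix (Fin (n+2)) (Fin (n+2)) ℝ)
    (h0 : ∀ j : Fin (n+2), 1 < (j : ℕ) → H 0 j = 0)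
    (hc : ∀ i : Fin (n+2), 1 < (i : ℕ) → H i 0 = 0) :
    charpoly H = (X - C (H 0 0)) * charpoly (tl H)
      - C (H 0 1 * H 1 0) * charpoly (tl (tl H)) := by
  have hsa0 : (1 : Fin (n+2)).succAbove 0 = 0 := by
    rw [Fin.succAbove_of_castSucc_lt]
    · rfl
    · simp [Fin.castSucc_zero]
  have hsa1 : ∀ k : Fin n, (1 : Fin (n+2)).succAbove k.succ = k.succ.succ := by
    intro k
    rw [Fin.succAbove_of_le_castSucc]
    simp [Fin.le_castSucc_iff, Fin.lt_iff_val_lt_val, Fin.le_iff_val_le_val]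
  set A := charmatrix H with hA
  -- second minor
  have hminor2 : ((A.submatrix Fin.succ ((1 : Fin (n+2)).succAbove)).submatrix
      ((0 : Fin (n+1)).succAbove) Fin.succ) = charmatrix (tl (tl H)) := by
    rw [charmatrix_tl, charmatrix_tl, submatrix_submatrix, submatrix_submatrix]
    ext i j : 2
    simp only [submatrix_apply, Fin.succAbove_zero, Function.comp_apply]
    rw [hsa1 j]
  have hdet2 : (A.submatrix Fin.succ ((1 : Fin (n+2)).succAbove)).det
      = -C (H 1 0) * charpoly (tl (tl H)) := by
    rw [det_succ_column_zero, Fin.sum_univ_succ]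
    have hz : ∀ k : Fin n,
        (-1 : ℝ[X]) ^ ((k.succ : Fin (n+1)) : ℕ) *
          (A.submatrix Fin.succ ((1 : Fin (n+2)).succAbove)) k.succ 0 *
          ((A.submatrix Fin.succ ((1 : Fin (n+2)).succAbove)).submatrix k.succ.succAbove
            Fin.succ).det = 0 := by
      intro k
      have : (A.submatrix Fin.succ ((1 : Fin (n+2)).succAbove)) k.succ 0 = 0 := by
        rw [submatrix_apply, hsa0, hA, charmatrix_apply_ne]
        · rw [hc k.succ.succ (by simp [Fin.val_succ]), map_zero, neg_zero]
        · exact fun h => by simpa using congrArg Fin.val h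
      rw [this]; ring
    rw [Finset.sum_eq_zero (fun k _ => hz k), add_zero]
    rw [hminor2]
    simp only [Fin.val_zero, pow_zero, one_mul, submatrix_apply, hsa0]
    rw [hA, charmatrix_apply_ne _ _ _ (fun h => by simpa using congrArg Fin.val h)]
    rfl
  rw [charpoly, det_succ_row_zero, Fin.sum_univ_succ, Fin.sum_univ_succ]
  have hz : ∀ k : Fin n,
      (-1 : ℝ[X]) ^ (((k.succ.succ : Fin (n+2))) : ℕ) * A 0 k.succ.succ *
        (A.submatrix Fin.succ (k.succ.succ).succAbove).det = 0 := by
    intro k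
    have : A 0 k.succ.succ = 0 := by
      rw [hA, charmatrix_apply_ne _ _ _ (fun h => by simpa using congrArg Fin.val h)]
      rw [h0 k.succ.succ (by simp [Fin.val_succ]), map_zero, neg_zero]
    rw [this]; ring
  rw [Finset.sum_eq_zero (fun k _ => hz k), add_zero]
  have e1 : (A.submatrix Fin.succ ((0 : Fin (n+2)).succAbove)).det = charpoly (tl H) := by
    rw [Fin.succAbove_zero, ← charmatrix_tl]; rfl
  have e00 : A 0 0 = X - C (H 0 0) := charmatrix_apply_eq _ _
  have e01 : A 0 1 = -C (H 0 1) := by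
    rw [hA, charmatrix_apply_ne _ _ _ (fun h => by simpa using congrArg Fin.val h)]
  have h1 : ((0 : Fin (n+1)).succ : Fin (n+2)) = 1 := rfl
  rw [hA] at e00 e01
  rw [h1, e1, hdet2, e00, e01]
  simp only [Fin.val_zero, Fin.val_one, pow_zero, pow_one, Polynomial.C_mul]
  ring

lemma poly_key {q r r' : ℝ[X]} {a a' c c' : ℝ} (m : ℕ)
    (hq : q.natDegree = m + 1) (hqm : q.Monic)
    (hr : r.natDegree = m) (hrm : r.Monic)
    (hr' : r'.natDegree = m) (hrm' : r'.Monic)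
    (heq : (X - C a) * q - C c * r = (X - C a') * q - C c' * r') :
    a = a' ∧ c = c' ∧ (c ≠ 0 → r = r') := by
  have hq1 : q.coeff (m + 1) = 1 := by rw [← hq]; exact hqm.coeff_natDegree
  have hr0 : r.coeff (m + 1) = 0 := coeff_eq_zero_of_natDegree_lt (by omega)
  have hr0' : r'.coeff (m + 1) = 0 := coeff_eq_zero_of_natDegree_lt (by omega)
  have hrc : r.coeff m = 1 := by rw [← hr]; exact hrm.coeff_natDegree
  have hrc' : r'.coeff m = 1 := by rw [← hr']; exact hrm'.coeff_natDegree
  have hcoeff := congrArg (fun p => Polynomial.coeff p (m + 1)) heq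
  simp only [sub_mul, coeff_sub, coeff_X_mul, coeff_C_mul, hq1, hr0, hr0',
    mul_one, mul_zero, sub_zero] at hcoeff
  have ha : a = a' := by linarith
  have hcr : C c * r = C c' * r' := by
    rw [ha] at heq
    exact sub_right_injective heq
  have hcoeff2 := congrArg (fun p => Polynomial.coeff p m) hcr
  simp only [coeff_C_mul, hrc, hrc', mul_one] at hcoeff2
  refine ⟨ha, hcoeff2, fun hc => ?_⟩
  have : C c ≠ 0 := fun h => hc (by simpa using congrArg (fun p => Polynomial.coeff p 0) h)
  exact mul_left_cancel₀ this (by rw [hcr, hcoeff2])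

lemma tl_jacobi {n : ℕ} {H : Matrix (Fin (n+1)) (Fin (n+1)) ℝ} (h : IsJacobi H) :
    IsJacobi (tl H) := by
  obtain ⟨hs, hu, hp⟩ := h
  refine ⟨?_, ?_, ?_⟩
  · ext i j
    simp only [tl, transpose_apply, submatrix_apply]
    exact hs.apply _ _
  · intro i j hij
    exact hu _ _ (by simp only [Fin.val_succ] at hij ⊢; omega)
  · intro i j hij
    exact hp _ _ (by simp only [Fin.val_succ] at hij ⊢; omega)

lemma jacobi_ext : ∀ (n : ℕ) (H H' : Matrix (Fin (n+1)) (Fin (n+1)) ℝ),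
    IsJacobi H → IsJacobi H' → charpoly H = charpoly H' →
    charpoly (tl H) = charpoly (tl H') → H = H' := by
  intro n
  induction n with
  | zero =>
    intro H H' _ _ hfull _
    have h1 : charpoly H = X - C (H 0 0) := by
      rw [charpoly, det_fin_one]; exact charmatrix_apply_eq _ _
    have h1' : charpoly H' = X - C (H' 0 0) := by
      rw [charpoly, det_fin_one]; exact charmatrix_apply_eq _ _
    rw [h1, h1'] at hfull
    have key : H 0 0 = H' 0 0 := by
      have h := congrArg (fun p => Polynomial.coeff p 0) hfull
      simp only [coeff_sub, coeff_X_zero, coeff_C_zero, zero_sub, neg_inj] at h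
      exact h
    ext i j
    fin_cases i <;> fin_cases j
    exact key
  | succ n IH =>
    intro H H' hJ hJ' hfull htl
    obtain ⟨hs, hu, hp⟩ := hJ
    obtain ⟨hs', hu', hp'⟩ := hJ'
    have hrec := charpoly_tl_rec H (fun j hj => hu 0 j (by simpa using hj))
      (fun i hi => by rw [hs.apply]; exact hu 0 i (by simpa using hi))
    have hrec' := charpoly_tl_rec H' (fun j hj => hu' 0 j (by simpa using hj))
      (fun i hi => by rw [hs'.apply]; exact hu' 0 i (by simpa using hi))
    rw [htl, hfull, hrec'] at hrec
    have hdq : (charpoly (tl H')).natDegree = n + 1 := by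
      rw [Matrix.charpoly_natDegree_eq_dim, Fintype.card_fin]
    have hdr : (charpoly (tl (tl H'))).natDegree = n := by
      rw [Matrix.charpoly_natDegree_eq_dim, Fintype.card_fin]
    have hdr' : (charpoly (tl (tl H))).natDegree = n := by
      rw [Matrix.charpoly_natDegree_eq_dim, Fintype.card_fin]
    obtain ⟨ha, hc, hrr⟩ := poly_key n hdq (Matrix.charpoly_monic _)
      hdr (Matrix.charpoly_monic _) hdr' (Matrix.charpoly_monic _) hrec
    -- ha : H' 0 0 = H 0 0, hc : H' 0 1 * H' 1 0 = H 0 1 * H 1 0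
    have h01' : 0 < H' 0 1 := hp' 0 1 (by simp)
    have h01 : 0 < H 0 1 := hp 0 1 (by simp)
    have hsym10 : H 1 0 = H 0 1 := hs.apply 0 1
    have hsym10' : H' 1 0 = H' 0 1 := hs'.apply 0 1
    have hcne : H' 0 1 * H' 1 0 ≠ 0 := by
      rw [hsym10']; positivity
    have hb : H 0 1 = H' 0 1 := by
      rw [hsym10, hsym10'] at hc
      rcases mul_self_eq_mul_self_iff.mp hc with h | h
      · exact h.symm
      · nlinarith
    have htleq : tl H = tl H' :=
      IH (tl H) (tl H') (tl_jacobi ⟨hs, hu, hp⟩) (tl_jacobi ⟨hs', hu', hp'⟩) htl (hrr hcne).symm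
    have hrow : ∀ k : Fin (n+1+1), H 0 k = H' 0 k := by
      intro k
      by_cases hk0 : (k : ℕ) = 0
      · have : k = 0 := Fin.ext hk0
        rw [this]; exact ha.symm
      · by_cases hk1 : (k : ℕ) = 1
        · have : k = 1 := Fin.ext (by simpa using hk1)
          rw [this]; exact hb
        · rw [hu 0 k (by simp only [Fin.val_zero]; omega), hu' 0 k (by simp only [Fin.val_zero]; omega)]
    ext i j
    refine Fin.cases ?_ (fun i' => ?_) i
    · exact hrow j
    · refine Fin.cases ?_ (fun j' => ?_) j
      · rw [hs.apply 0 i'.succ, hs'.apply 0 i'.succ]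
        exact hrow _
      · exact congrFun (congrFun htleq i') j'

/-- Hochstadt's theorem (n = 1): a Jacobi matrix is uniquely determined by its
spectrum together with the spectrum of the matrix obtained by deleting the
first row and column. -/
theorem hochstadt_uniqueness {N : ℕ} (hN : 0 < N)
    (H H' : Matrix (Fin N) (Fin N) ℝ) (hH : IsJacobi H) (hH' : IsJacobi H')
    (hfull : spectrum ℝ H = spectrum ℝ H')
    (hplus : spectrum ℝ (Jplus H ⟨0, hN⟩) = spectrum ℝ (Jplus H' ⟨0, hN⟩)) :
    H = H' := by
  obtain ⟨m, rfl⟩ : ∃ m, N = m + 1 := ⟨N - 1, by omega⟩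
  have hJp : Jplus H ⟨0, hN⟩ = tl H := by
    ext i j
    simp only [Jplus, tl, submatrix_apply]
    congr 1 <;> exact Fin.ext (by simp [Fin.val_succ]; omega)
  have hJp' : Jplus H' ⟨0, hN⟩ = tl H' := by
    ext i j
    simp only [Jplus, tl, submatrix_apply]
    congr 1 <;> exact Fin.ext (by simp [Fin.val_succ]; omega)
  have h1 := jacobi_charpoly_of_spectrum_eq H H' hH hH' hfull
  have h2 := jacobi_charpoly_of_spectrum_eq (tl H) (tl H') (tl_jacobi hH) (tl_jacobi hH')
    (by rw [← hJp, ← hJp']; exact hplus)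
  exact jacobi_ext m H H' hH hH' h1 h2
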